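/- Let G⁽⁴⁾₁, …, G⁽⁴⁾₁₆ be the sixteen four-qubit states of the paper's Theorem 7, viewed in ℂ² ⊗ (ℂ² ⊗ ℂ² ⊗ ℂ²). For every pair α, β ∈ {1, …, 16}, there exists a unitary operator U on the three-qubit space ℂ² ⊗ ℂ² ⊗ ℂ² such that G⁽⁴⁾_α = (I ⊗ U) G⁽⁴⁾_β, where I is the identity on the first qubit. In particular, every state of the set is obtained from any other by a unitary acting on the last three qubits alone (the 1 : 3 bipartition property). -/

import Mathlib

open scoped InnerProductSpace

noncomputable section

/-- The standard basis kets `|0⟩, |1⟩` of a qubit `ℂ² = EuclideanSpace ℂ (Fin 2)`. -/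
def ket2 (i : Fin 2) : EuclideanSpace ℂ (Fin 2) := EuclideanSpace.single i 1

/-- Tensor product of vectors of Euclidean spaces, realized concretely:
`(x ⊗ y) (i, j) = x i * y j`.  The induced inner product on
`EuclideanSpace ℂ (ι × κ)` is exactly the tensor-product inner product. -/
def tp {ι κ : Type*} [Fintype ι] [Fintype κ]
    (x : EuclideanSpace ℂ ι) (y : EuclideanSpace ℂ κ) : EuclideanSpace ℂ (ι × κ) :=
  (WithLp.equiv 2 _).symm fun p => x p.1 * y p.2

/-- The four-qubit basis state `|abcd⟩ = |a⟩ ⊗ |b⟩ ⊗ |c⟩ ⊗ |d⟩`. -/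
def ket4 (a b c d : Fin 2) : EuclideanSpace ℂ (Fin 2 × Fin 2 × Fin 2 × Fin 2) :=
  tp (ket2 a) (tp (ket2 b) (tp (ket2 c) (ket2 d)))

/-- The sixteen four-qubit states `G⁽⁴⁾₁, …, G⁽⁴⁾₁₆` of the paper's Theorem 7
(indexed here by `0, …, 15`; odd paper-indices take the upper signs, even
paper-indices the lower signs). -/
def G4 : Fin 16 → EuclideanSpace ℂ (Fin 2 × Fin 2 × Fin 2 × Fin 2) :=
  ![(2 : ℂ)⁻¹ • (ket4 0 0 0 0 + ket4 0 1 1 1 + ket4 1 0 1 0 + ket4 1 1 0 1),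
    (2 : ℂ)⁻¹ • (ket4 0 0 0 0 - ket4 0 1 1 1 + ket4 1 0 1 0 - ket4 1 1 0 1),
    (2 : ℂ)⁻¹ • (ket4 0 0 0 0 + ket4 0 1 1 1 - ket4 1 0 1 0 - ket4 1 1 0 1),
    (2 : ℂ)⁻¹ • (ket4 0 0 0 0 - ket4 0 1 1 1 - ket4 1 0 1 0 + ket4 1 1 0 1),
    (2 : ℂ)⁻¹ • (ket4 0 0 0 1 + ket4 0 1 1 0 + ket4 1 0 1 1 + ket4 1 1 0 0),
    (2 : ℂ)⁻¹ • (ket4 0 0 0 1 - ket4 0 1 1 0 + ket4 1 0 1 1 - ket4 1 1 0 0),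
    (2 : ℂ)⁻¹ • (ket4 0 0 0 1 + ket4 0 1 1 0 - ket4 1 0 1 1 - ket4 1 1 0 0),
    (2 : ℂ)⁻¹ • (ket4 0 0 0 1 - ket4 0 1 1 0 - ket4 1 0 1 1 + ket4 1 1 0 0),
    (2 : ℂ)⁻¹ • (ket4 0 0 1 0 + ket4 0 1 0 1 + ket4 1 0 0 0 + ket4 1 1 1 1),
    (2 : ℂ)⁻¹ • (ket4 0 0 1 0 - ket4 0 1 0 1 + ket4 1 0 0 0 - ket4 1 1 1 1),
    (2 : ℂ)⁻¹ • (ket4 0 0 1 0 + ket4 0 1 0 1 - ket4 1 0 0 0 - ket4 1 1 1 1),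
    (2 : ℂ)⁻¹ • (ket4 0 0 1 0 - ket4 0 1 0 1 - ket4 1 0 0 0 + ket4 1 1 1 1),
    (2 : ℂ)⁻¹ • (ket4 0 0 1 1 + ket4 0 1 0 0 + ket4 1 0 0 1 + ket4 1 1 1 0),
    (2 : ℂ)⁻¹ • (ket4 0 0 1 1 - ket4 0 1 0 0 + ket4 1 0 0 1 - ket4 1 1 1 0),
    (2 : ℂ)⁻¹ • (ket4 0 0 1 1 + ket4 0 1 0 0 - ket4 1 0 0 1 - ket4 1 1 1 0),
    (2 : ℂ)⁻¹ • (ket4 0 0 1 1 - ket4 0 1 0 0 - ket4 1 0 0 1 + ket4 1 1 1 0)]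

/-- The operator `I ⊗ U` on `ℂ^ι ⊗ ℂ^κ ≅ EuclideanSpace ℂ (ι × κ)`, acting as the
identity on the first tensor factor and as the matrix `U` on the second. -/
def idTensorMat {ι κ : Type*} [Fintype ι] [Fintype κ] (U : Matrix κ κ ℂ)
    (v : EuclideanSpace ℂ (ι × κ)) : EuclideanSpace ℂ (ι × κ) :=
  (WithLp.equiv 2 _).symm fun p => ∑ q, U p.2 q * v (p.1, q)

/-- The 2×2 matrix `X^t Z^s` (apply `Z^s` first, then `X^t`). -/
def MXZ (t s : Fin 2) : Matrix (Fin 2) (Fin 2) ℂ :=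
  fun p q => if q = p + t then ((-1 : ℂ)) ^ (s.val * q.val) else 0

/-- `I ⊗ A ⊗ B` on the three-qubit index type. -/
def KB (A B : Matrix (Fin 2) (Fin 2) ℂ) :
    Matrix (Fin 2 × Fin 2 × Fin 2) (Fin 2 × Fin 2 × Fin 2) ℂ :=
  fun p q => (if p.1 = q.1 then 1 else 0) * (A p.2.1 q.2.1 * B p.2.2 q.2.2)

lemma KB_star (A B : Matrix (Fin 2) (Fin 2) ℂ) :
    star (KB A B) = KB (star A) (star B) := by
  ext ⟨p1, p2, p3⟩ ⟨q1, q2, q3⟩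
  by_cases h : p1 = q1
  · subst h; simp [KB, Matrix.star_apply]
  · simp [KB, Matrix.star_apply, h, Ne.symm h]

lemma KB_mul (A B A' B' : Matrix (Fin 2) (Fin 2) ℂ) :
    KB A B * KB A' B' = KB (A * A') (B * B') := by
  ext ⟨p1, p2, p3⟩ ⟨q1, q2, q3⟩
  fin_cases p1 <;> fin_cases q1 <;>
    simp [KB, Matrix.mul_apply, Fintype.sum_prod_type, Fin.sum_univ_two] <;> ring

lemma KB_one : KB (1 : Matrix (Fin 2) (Fin 2) ℂ) 1 = 1 := by
  ext ⟨p1, p2, p3⟩ ⟨q1, q2, q3⟩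
  by_cases h1 : p1 = q1 <;> by_cases h2 : p2 = q2 <;> by_cases h3 : p3 = q3 <;>
    simp [KB, Matrix.one_apply, h1, h2, h3, Prod.ext_iff]

lemma MXZ_unitary (t s : Fin 2) :
    star (MXZ t s) * MXZ t s = 1 := by
  fin_cases t <;> fin_cases s <;>
  · ext i j
    fin_cases i <;> fin_cases j <;>
      simp [MXZ, Matrix.mul_apply, Fin.sum_univ_two, Matrix.one_apply,
        Matrix.star_apply]

/-- Tables of `X`-exponents and `Z`-exponents on qubits 3 and 4. -/
def tv3 : Fin 16 → Fin 2 := ![0,0,0,0, 0,0,0,0, 1,1,1,1, 1,1,1,1]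
def tv4 : Fin 16 → Fin 2 := ![0,0,0,0, 1,1,1,1, 0,0,0,0, 1,1,1,1]
def sv3 : Fin 16 → Fin 2 := ![0,0,1,1, 0,0,1,1, 0,0,1,1, 0,0,1,1]
def sv4 : Fin 16 → Fin 2 := ![0,1,1,0, 0,1,1,0, 0,1,1,0, 0,1,1,0]

@[simp] lemma tv3_0 : tv3 0 = 0 := rfl
@[simp] lemma tv3_1 : tv3 1 = 0 := rfl
@[simp] lemma tv3_2 : tv3 2 = 0 := rfl
@[simp] lemma tv3_3 : tv3 3 = 0 := rfl
@[simp] lemma tv3_4 : tv3 4 = 0 := rfl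
@[simp] lemma tv3_5 : tv3 5 = 0 := rfl
@[simp] lemma tv3_6 : tv3 6 = 0 := rfl
@[simp] lemma tv3_7 : tv3 7 = 0 := rfl
@[simp] lemma tv3_8 : tv3 8 = 1 := rfl
@[simp] lemma tv3_9 : tv3 9 = 1 := rfl
@[simp] lemma tv3_10 : tv3 10 = 1 := rfl
@[simp] lemma tv3_11 : tv3 11 = 1 := rfl
@[simp] lemma tv3_12 : tv3 12 = 1 := rfl
@[simp] lemma tv3_13 : tv3 13 = 1 := rfl
@[simp] lemma tv3_14 : tv3 14 = 1 := rfl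
@[simp] lemma tv3_15 : tv3 15 = 1 := rfl
@[simp] lemma tv4_0 : tv4 0 = 0 := rfl
@[simp] lemma tv4_1 : tv4 1 = 0 := rfl
@[simp] lemma tv4_2 : tv4 2 = 0 := rfl
@[simp] lemma tv4_3 : tv4 3 = 0 := rfl
@[simp] lemma tv4_4 : tv4 4 = 1 := rfl
@[simp] lemma tv4_5 : tv4 5 = 1 := rfl
@[simp] lemma tv4_6 : tv4 6 = 1 := rfl
@[simp] lemma tv4_7 : tv4 7 = 1 := rfl
@[simp] lemma tv4_8 : tv4 8 = 0 := rfl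
@[simp] lemma tv4_9 : tv4 9 = 0 := rfl
@[simp] lemma tv4_10 : tv4 10 = 0 := rfl
@[simp] lemma tv4_11 : tv4 11 = 0 := rfl
@[simp] lemma tv4_12 : tv4 12 = 1 := rfl
@[simp] lemma tv4_13 : tv4 13 = 1 := rfl
@[simp] lemma tv4_14 : tv4 14 = 1 := rfl
@[simp] lemma tv4_15 : tv4 15 = 1 := rfl
@[simp] lemma sv3_0 : sv3 0 = 0 := rfl
@[simp] lemma sv3_1 : sv3 1 = 0 := rfl
@[simp] lemma sv3_2 : sv3 2 = 1 := rfl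
@[simp] lemma sv3_3 : sv3 3 = 1 := rfl
@[simp] lemma sv3_4 : sv3 4 = 0 := rfl
@[simp] lemma sv3_5 : sv3 5 = 0 := rfl
@[simp] lemma sv3_6 : sv3 6 = 1 := rfl
@[simp] lemma sv3_7 : sv3 7 = 1 := rfl
@[simp] lemma sv3_8 : sv3 8 = 0 := rfl
@[simp] lemma sv3_9 : sv3 9 = 0 := rfl
@[simp] lemma sv3_10 : sv3 10 = 1 := rfl
@[simp] lemma sv3_11 : sv3 11 = 1 := rfl
@[simp] lemma sv3_12 : sv3 12 = 0 := rfl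
@[simp] lemma sv3_13 : sv3 13 = 0 := rfl
@[simp] lemma sv3_14 : sv3 14 = 1 := rfl
@[simp] lemma sv3_15 : sv3 15 = 1 := rfl
@[simp] lemma sv4_0 : sv4 0 = 0 := rfl
@[simp] lemma sv4_1 : sv4 1 = 1 := rfl
@[simp] lemma sv4_2 : sv4 2 = 1 := rfl
@[simp] lemma sv4_3 : sv4 3 = 0 := rfl
@[simp] lemma sv4_4 : sv4 4 = 0 := rfl
@[simp] lemma sv4_5 : sv4 5 = 1 := rfl
@[simp] lemma sv4_6 : sv4 6 = 1 := rfl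
@[simp] lemma sv4_7 : sv4 7 = 0 := rfl
@[simp] lemma sv4_8 : sv4 8 = 0 := rfl
@[simp] lemma sv4_9 : sv4 9 = 1 := rfl
@[simp] lemma sv4_10 : sv4 10 = 1 := rfl
@[simp] lemma sv4_11 : sv4 11 = 0 := rfl
@[simp] lemma sv4_12 : sv4 12 = 0 := rfl
@[simp] lemma sv4_13 : sv4 13 = 1 := rfl
@[simp] lemma sv4_14 : sv4 14 = 1 := rfl
@[simp] lemma sv4_15 : sv4 15 = 0 := rfl

/-- The signed-permutation unitary carrying `G4 0` to `G4 α`. -/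
def PU (α : Fin 16) : Matrix (Fin 2 × Fin 2 × Fin 2) (Fin 2 × Fin 2 × Fin 2) ℂ :=
  KB (MXZ (tv3 α) (sv3 α)) (MXZ (tv4 α) (sv4 α))

lemma PU_unitary (α : Fin 16) :
    PU α ∈ Matrix.unitaryGroup (Fin 2 × Fin 2 × Fin 2) ℂ := by
  rw [Matrix.mem_unitaryGroup_iff']
  rw [show star (PU α) * PU α
      = KB (star (MXZ (tv3 α) (sv3 α)) * MXZ (tv3 α) (sv3 α))
           (star (MXZ (tv4 α) (sv4 α)) * MXZ (tv4 α) (sv4 α)) by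
    rw [PU, KB_star, KB_mul]]
  rw [MXZ_unitary, MXZ_unitary, KB_one]

lemma idTensorMat_mul {ι κ : Type*} [Fintype ι] [Fintype κ]
    (U V : Matrix κ κ ℂ) (v : EuclideanSpace ℂ (ι × κ)) :
    idTensorMat (U * V) v = idTensorMat U (idTensorMat V v) := by
  ext ⟨p1, p2⟩
  simp only [idTensorMat, WithLp.equiv_symm_apply, PiLp.toLp_apply, Matrix.mul_apply,
    Finset.sum_mul, Finset.mul_sum]
  rw [Finset.sum_comm]
  exact Finset.sum_congr rfl fun q _ => Finset.sum_congr rfl fun r _ => by ring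

lemma idTensorMat_one {ι κ : Type*} [Fintype ι] [Fintype κ] [DecidableEq κ]
    (v : EuclideanSpace ℂ (ι × κ)) : idTensorMat (1 : Matrix κ κ ℂ) v = v := by
  ext ⟨p1, p2⟩
  simp [idTensorMat, Matrix.one_apply]

lemma idTensorMat_add {ι κ : Type*} [Fintype ι] [Fintype κ] (U : Matrix κ κ ℂ)
    (v w : EuclideanSpace ℂ (ι × κ)) :
    idTensorMat U (v + w) = idTensorMat U v + idTensorMat U w := by
  ext ⟨p1, p2⟩
  simp [idTensorMat, mul_add, Finset.sum_add_distrib]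

lemma idTensorMat_sub {ι κ : Type*} [Fintype ι] [Fintype κ] (U : Matrix κ κ ℂ)
    (v w : EuclideanSpace ℂ (ι × κ)) :
    idTensorMat U (v - w) = idTensorMat U v - idTensorMat U w := by
  ext ⟨p1, p2⟩
  simp [idTensorMat, mul_sub, Finset.sum_sub_distrib]

lemma idTensorMat_smul {ι κ : Type*} [Fintype ι] [Fintype κ] (U : Matrix κ κ ℂ)
    (r : ℂ) (v : EuclideanSpace ℂ (ι × κ)) :
    idTensorMat U (r • v) = r • idTensorMat U v := by
  ext ⟨p1, p2⟩
  simp [idTensorMat, Finset.mul_sum]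
  exact Finset.sum_congr rfl fun q _ => by ring

lemma fin2_add_add (c t : Fin 2) : c + t + t = c := by fin_omega

lemma fin2_shift (y t c : Fin 2) : (y + t = c) ↔ (y = c + t) := by
  constructor
  · intro h; subst h; rw [fin2_add_add]
  · intro h; subst h; rw [fin2_add_add]

/-- Action of `PU α` on a basis ket. -/
lemma PU_ket4 (α : Fin 16) (a b c d : Fin 2) :
    idTensorMat (PU α) (ket4 a b c d)
      = ((-1 : ℂ)) ^ ((sv3 α).val * c.val + (sv4 α).val * d.val) •
          ket4 a b (c + tv3 α) (d + tv4 α) := by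
  ext ⟨w, x, y, z⟩
  have lhs : (idTensorMat (PU α) (ket4 a b c d)) (w, x, y, z)
      = ∑ q, PU α (x, y, z) q * ket4 a b c d (w, q) := rfl
  rw [lhs, Finset.sum_eq_single (x, y + tv3 α, z + tv4 α)]
  · simp only [PU, KB, MXZ, ket4, tp, ket2, WithLp.equiv_symm_apply, PiLp.toLp_apply,
      EuclideanSpace.single_apply, PiLp.smul_apply, smul_eq_mul,
      if_pos rfl, fin2_shift]
    simp only [pow_add]
    by_cases h3 : y = c + tv3 α
    · by_cases h4 : z = d + tv4 α
      · subst h3; subst h4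
        rw [fin2_add_add, fin2_add_add]
        simp only [if_pos rfl]
        by_cases hw : w = a <;> by_cases hx : x = b <;>
          simp [hw, hx] <;> ring
      · simp [h3, h4]
    · simp [h3]
  · rintro ⟨q1, q2, q3⟩ - hne
    simp only [PU, KB, MXZ, ket4, tp, ket2, WithLp.equiv_symm_apply, PiLp.toLp_apply,
      EuclideanSpace.single_apply]
    by_cases e1 : x = q1
    · by_cases e2 : q2 = y + tv3 α
      · by_cases e3 : q3 = z + tv4 α
        · exact absurd (by simp [← e1, e2, e3]) hne
        · simp [e3]
      · simp [e2]
    · simp [e1]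
  · intro h; exact absurd (Finset.mem_univ _) h

lemma G4_eq_PU_0 : G4 0 = idTensorMat (PU 0) (G4 0) := by
  show (2 : ℂ)⁻¹ • (ket4 0 0 0 0 + ket4 0 1 1 1 + ket4 1 0 1 0 + ket4 1 1 0 1) = idTensorMat (PU 0) ((2 : ℂ)⁻¹ • (ket4 0 0 0 0 + ket4 0 1 1 1 + ket4 1 0 1 0 + ket4 1 1 0 1))
  simp only [G4, Matrix.cons_val_zero, Matrix.cons_val_one, Matrix.head_cons,
    idTensorMat_smul, idTensorMat_add, idTensorMat_sub, PU_ket4,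
    tv3_0, tv3_1, tv3_2, tv3_3, tv3_4, tv3_5, tv3_6, tv3_7, tv3_8, tv3_9,
    tv3_10, tv3_11, tv3_12, tv3_13, tv3_14, tv3_15,
    tv4_0, tv4_1, tv4_2, tv4_3, tv4_4, tv4_5, tv4_6, tv4_7, tv4_8, tv4_9,
    tv4_10, tv4_11, tv4_12, tv4_13, tv4_14, tv4_15,
    sv3_0, sv3_1, sv3_2, sv3_3, sv3_4, sv3_5, sv3_6, sv3_7, sv3_8, sv3_9,
    sv3_10, sv3_11, sv3_12, sv3_13, sv3_14, sv3_15,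
    sv4_0, sv4_1, sv4_2, sv4_3, sv4_4, sv4_5, sv4_6, sv4_7, sv4_8, sv4_9,
    sv4_10, sv4_11, sv4_12, sv4_13, sv4_14, sv4_15,
    show (0:Fin 2)+0 = 0 from rfl, show (0:Fin 2)+1 = 1 from rfl,
    show (1:Fin 2)+0 = 1 from rfl, show (1:Fin 2)+1 = 0 from rfl] <;>
  norm_num <;>
  module

lemma G4_eq_PU_1 : G4 1 = idTensorMat (PU 1) (G4 0) := by
  show (2 : ℂ)⁻¹ • (ket4 0 0 0 0 - ket4 0 1 1 1 + ket4 1 0 1 0 - ket4 1 1 0 1) = idTensorMat (PU 1) ((2 : ℂ)⁻¹ • (ket4 0 0 0 0 + ket4 0 1 1 1 + ket4 1 0 1 0 + ket4 1 1 0 1))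
  simp only [G4, Matrix.cons_val_zero, Matrix.cons_val_one, Matrix.head_cons,
    idTensorMat_smul, idTensorMat_add, idTensorMat_sub, PU_ket4,
    tv3_0, tv3_1, tv3_2, tv3_3, tv3_4, tv3_5, tv3_6, tv3_7, tv3_8, tv3_9,
    tv3_10, tv3_11, tv3_12, tv3_13, tv3_14, tv3_15,
    tv4_0, tv4_1, tv4_2, tv4_3, tv4_4, tv4_5, tv4_6, tv4_7, tv4_8, tv4_9,
    tv4_10, tv4_11, tv4_12, tv4_13, tv4_14, tv4_15,
    sv3_0, sv3_1, sv3_2, sv3_3, sv3_4, sv3_5, sv3_6, sv3_7, sv3_8, sv3_9,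
    sv3_10, sv3_11, sv3_12, sv3_13, sv3_14, sv3_15,
    sv4_0, sv4_1, sv4_2, sv4_3, sv4_4, sv4_5, sv4_6, sv4_7, sv4_8, sv4_9,
    sv4_10, sv4_11, sv4_12, sv4_13, sv4_14, sv4_15,
    show (0:Fin 2)+0 = 0 from rfl, show (0:Fin 2)+1 = 1 from rfl,
    show (1:Fin 2)+0 = 1 from rfl, show (1:Fin 2)+1 = 0 from rfl] <;>
  norm_num <;>
  module

lemma G4_eq_PU_2 : G4 2 = idTensorMat (PU 2) (G4 0) := by
  show (2 : ℂ)⁻¹ • (ket4 0 0 0 0 + ket4 0 1 1 1 - ket4 1 0 1 0 - ket4 1 1 0 1) = idTensorMat (PU 2) ((2 : ℂ)⁻¹ • (ket4 0 0 0 0 + ket4 0 1 1 1 + ket4 1 0 1 0 + ket4 1 1 0 1))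
  simp only [G4, Matrix.cons_val_zero, Matrix.cons_val_one, Matrix.head_cons,
    idTensorMat_smul, idTensorMat_add, idTensorMat_sub, PU_ket4,
    tv3_0, tv3_1, tv3_2, tv3_3, tv3_4, tv3_5, tv3_6, tv3_7, tv3_8, tv3_9,
    tv3_10, tv3_11, tv3_12, tv3_13, tv3_14, tv3_15,
    tv4_0, tv4_1, tv4_2, tv4_3, tv4_4, tv4_5, tv4_6, tv4_7, tv4_8, tv4_9,
    tv4_10, tv4_11, tv4_12, tv4_13, tv4_14, tv4_15,
    sv3_0, sv3_1, sv3_2, sv3_3, sv3_4, sv3_5, sv3_6, sv3_7, sv3_8, sv3_9,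
    sv3_10, sv3_11, sv3_12, sv3_13, sv3_14, sv3_15,
    sv4_0, sv4_1, sv4_2, sv4_3, sv4_4, sv4_5, sv4_6, sv4_7, sv4_8, sv4_9,
    sv4_10, sv4_11, sv4_12, sv4_13, sv4_14, sv4_15,
    show (0:Fin 2)+0 = 0 from rfl, show (0:Fin 2)+1 = 1 from rfl,
    show (1:Fin 2)+0 = 1 from rfl, show (1:Fin 2)+1 = 0 from rfl] <;>
  norm_num <;>
  module

lemma G4_eq_PU_3 : G4 3 = idTensorMat (PU 3) (G4 0) := by
  show (2 : ℂ)⁻¹ • (ket4 0 0 0 0 - ket4 0 1 1 1 - ket4 1 0 1 0 + ket4 1 1 0 1) = idTensorMat (PU 3) ((2 : ℂ)⁻¹ • (ket4 0 0 0 0 + ket4 0 1 1 1 + ket4 1 0 1 0 + ket4 1 1 0 1))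
  simp only [G4, Matrix.cons_val_zero, Matrix.cons_val_one, Matrix.head_cons,
    idTensorMat_smul, idTensorMat_add, idTensorMat_sub, PU_ket4,
    tv3_0, tv3_1, tv3_2, tv3_3, tv3_4, tv3_5, tv3_6, tv3_7, tv3_8, tv3_9,
    tv3_10, tv3_11, tv3_12, tv3_13, tv3_14, tv3_15,
    tv4_0, tv4_1, tv4_2, tv4_3, tv4_4, tv4_5, tv4_6, tv4_7, tv4_8, tv4_9,
    tv4_10, tv4_11, tv4_12, tv4_13, tv4_14, tv4_15,
    sv3_0, sv3_1, sv3_2, sv3_3, sv3_4, sv3_5, sv3_6, sv3_7, sv3_8, sv3_9,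
    sv3_10, sv3_11, sv3_12, sv3_13, sv3_14, sv3_15,
    sv4_0, sv4_1, sv4_2, sv4_3, sv4_4, sv4_5, sv4_6, sv4_7, sv4_8, sv4_9,
    sv4_10, sv4_11, sv4_12, sv4_13, sv4_14, sv4_15,
    show (0:Fin 2)+0 = 0 from rfl, show (0:Fin 2)+1 = 1 from rfl,
    show (1:Fin 2)+0 = 1 from rfl, show (1:Fin 2)+1 = 0 from rfl] <;>
  norm_num <;>
  module

lemma G4_eq_PU_4 : G4 4 = idTensorMat (PU 4) (G4 0) := by
  show (2 : ℂ)⁻¹ • (ket4 0 0 0 1 + ket4 0 1 1 0 + ket4 1 0 1 1 + ket4 1 1 0 0) = idTensorMat (PU 4) ((2 : ℂ)⁻¹ • (ket4 0 0 0 0 + ket4 0 1 1 1 + ket4 1 0 1 0 + ket4 1 1 0 1))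
  simp only [G4, Matrix.cons_val_zero, Matrix.cons_val_one, Matrix.head_cons,
    idTensorMat_smul, idTensorMat_add, idTensorMat_sub, PU_ket4,
    tv3_0, tv3_1, tv3_2, tv3_3, tv3_4, tv3_5, tv3_6, tv3_7, tv3_8, tv3_9,
    tv3_10, tv3_11, tv3_12, tv3_13, tv3_14, tv3_15,
    tv4_0, tv4_1, tv4_2, tv4_3, tv4_4, tv4_5, tv4_6, tv4_7, tv4_8, tv4_9,
    tv4_10, tv4_11, tv4_12, tv4_13, tv4_14, tv4_15,
    sv3_0, sv3_1, sv3_2, sv3_3, sv3_4, sv3_5, sv3_6, sv3_7, sv3_8, sv3_9,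
    sv3_10, sv3_11, sv3_12, sv3_13, sv3_14, sv3_15,
    sv4_0, sv4_1, sv4_2, sv4_3, sv4_4, sv4_5, sv4_6, sv4_7, sv4_8, sv4_9,
    sv4_10, sv4_11, sv4_12, sv4_13, sv4_14, sv4_15,
    show (0:Fin 2)+0 = 0 from rfl, show (0:Fin 2)+1 = 1 from rfl,
    show (1:Fin 2)+0 = 1 from rfl, show (1:Fin 2)+1 = 0 from rfl] <;>
  norm_num <;>
  module

lemma G4_eq_PU_5 : G4 5 = idTensorMat (PU 5) (G4 0) := by
  show (2 : ℂ)⁻¹ • (ket4 0 0 0 1 - ket4 0 1 1 0 + ket4 1 0 1 1 - ket4 1 1 0 0) = idTensorMat (PU 5) ((2 : ℂ)⁻¹ • (ket4 0 0 0 0 + ket4 0 1 1 1 + ket4 1 0 1 0 + ket4 1 1 0 1))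
  simp only [G4, Matrix.cons_val_zero, Matrix.cons_val_one, Matrix.head_cons,
    idTensorMat_smul, idTensorMat_add, idTensorMat_sub, PU_ket4,
    tv3_0, tv3_1, tv3_2, tv3_3, tv3_4, tv3_5, tv3_6, tv3_7, tv3_8, tv3_9,
    tv3_10, tv3_11, tv3_12, tv3_13, tv3_14, tv3_15,
    tv4_0, tv4_1, tv4_2, tv4_3, tv4_4, tv4_5, tv4_6, tv4_7, tv4_8, tv4_9,
    tv4_10, tv4_11, tv4_12, tv4_13, tv4_14, tv4_15,
    sv3_0, sv3_1, sv3_2, sv3_3, sv3_4, sv3_5, sv3_6, sv3_7, sv3_8, sv3_9,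
    sv3_10, sv3_11, sv3_12, sv3_13, sv3_14, sv3_15,
    sv4_0, sv4_1, sv4_2, sv4_3, sv4_4, sv4_5, sv4_6, sv4_7, sv4_8, sv4_9,
    sv4_10, sv4_11, sv4_12, sv4_13, sv4_14, sv4_15,
    show (0:Fin 2)+0 = 0 from rfl, show (0:Fin 2)+1 = 1 from rfl,
    show (1:Fin 2)+0 = 1 from rfl, show (1:Fin 2)+1 = 0 from rfl] <;>
  norm_num <;>
  module

lemma G4_eq_PU_6 : G4 6 = idTensorMat (PU 6) (G4 0) := by
  show (2 : ℂ)⁻¹ • (ket4 0 0 0 1 + ket4 0 1 1 0 - ket4 1 0 1 1 - ket4 1 1 0 0) = idTensorMat (PU 6) ((2 : ℂ)⁻¹ • (ket4 0 0 0 0 + ket4 0 1 1 1 + ket4 1 0 1 0 + ket4 1 1 0 1))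
  simp only [G4, Matrix.cons_val_zero, Matrix.cons_val_one, Matrix.head_cons,
    idTensorMat_smul, idTensorMat_add, idTensorMat_sub, PU_ket4,
    tv3_0, tv3_1, tv3_2, tv3_3, tv3_4, tv3_5, tv3_6, tv3_7, tv3_8, tv3_9,
    tv3_10, tv3_11, tv3_12, tv3_13, tv3_14, tv3_15,
    tv4_0, tv4_1, tv4_2, tv4_3, tv4_4, tv4_5, tv4_6, tv4_7, tv4_8, tv4_9,
    tv4_10, tv4_11, tv4_12, tv4_13, tv4_14, tv4_15,
    sv3_0, sv3_1, sv3_2, sv3_3, sv3_4, sv3_5, sv3_6, sv3_7, sv3_8, sv3_9,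
    sv3_10, sv3_11, sv3_12, sv3_13, sv3_14, sv3_15,
    sv4_0, sv4_1, sv4_2, sv4_3, sv4_4, sv4_5, sv4_6, sv4_7, sv4_8, sv4_9,
    sv4_10, sv4_11, sv4_12, sv4_13, sv4_14, sv4_15,
    show (0:Fin 2)+0 = 0 from rfl, show (0:Fin 2)+1 = 1 from rfl,
    show (1:Fin 2)+0 = 1 from rfl, show (1:Fin 2)+1 = 0 from rfl] <;>
  norm_num <;>
  module

lemma G4_eq_PU_7 : G4 7 = idTensorMat (PU 7) (G4 0) := by
  show (2 : ℂ)⁻¹ • (ket4 0 0 0 1 - ket4 0 1 1 0 - ket4 1 0 1 1 + ket4 1 1 0 0) = idTensorMat (PU 7) ((2 : ℂ)⁻¹ • (ket4 0 0 0 0 + ket4 0 1 1 1 + ket4 1 0 1 0 + ket4 1 1 0 1))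
  simp only [G4, Matrix.cons_val_zero, Matrix.cons_val_one, Matrix.head_cons,
    idTensorMat_smul, idTensorMat_add, idTensorMat_sub, PU_ket4,
    tv3_0, tv3_1, tv3_2, tv3_3, tv3_4, tv3_5, tv3_6, tv3_7, tv3_8, tv3_9,
    tv3_10, tv3_11, tv3_12, tv3_13, tv3_14, tv3_15,
    tv4_0, tv4_1, tv4_2, tv4_3, tv4_4, tv4_5, tv4_6, tv4_7, tv4_8, tv4_9,
    tv4_10, tv4_11, tv4_12, tv4_13, tv4_14, tv4_15,
    sv3_0, sv3_1, sv3_2, sv3_3, sv3_4, sv3_5, sv3_6, sv3_7, sv3_8, sv3_9,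
    sv3_10, sv3_11, sv3_12, sv3_13, sv3_14, sv3_15,
    sv4_0, sv4_1, sv4_2, sv4_3, sv4_4, sv4_5, sv4_6, sv4_7, sv4_8, sv4_9,
    sv4_10, sv4_11, sv4_12, sv4_13, sv4_14, sv4_15,
    show (0:Fin 2)+0 = 0 from rfl, show (0:Fin 2)+1 = 1 from rfl,
    show (1:Fin 2)+0 = 1 from rfl, show (1:Fin 2)+1 = 0 from rfl] <;>
  norm_num <;>
  module

lemma G4_eq_PU_8 : G4 8 = idTensorMat (PU 8) (G4 0) := by
  show (2 : ℂ)⁻¹ • (ket4 0 0 1 0 + ket4 0 1 0 1 + ket4 1 0 0 0 + ket4 1 1 1 1) = idTensorMat (PU 8) ((2 : ℂ)⁻¹ • (ket4 0 0 0 0 + ket4 0 1 1 1 + ket4 1 0 1 0 + ket4 1 1 0 1))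
  simp only [G4, Matrix.cons_val_zero, Matrix.cons_val_one, Matrix.head_cons,
    idTensorMat_smul, idTensorMat_add, idTensorMat_sub, PU_ket4,
    tv3_0, tv3_1, tv3_2, tv3_3, tv3_4, tv3_5, tv3_6, tv3_7, tv3_8, tv3_9,
    tv3_10, tv3_11, tv3_12, tv3_13, tv3_14, tv3_15,
    tv4_0, tv4_1, tv4_2, tv4_3, tv4_4, tv4_5, tv4_6, tv4_7, tv4_8, tv4_9,
    tv4_10, tv4_11, tv4_12, tv4_13, tv4_14, tv4_15,
    sv3_0, sv3_1, sv3_2, sv3_3, sv3_4, sv3_5, sv3_6, sv3_7, sv3_8, sv3_9,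
    sv3_10, sv3_11, sv3_12, sv3_13, sv3_14, sv3_15,
    sv4_0, sv4_1, sv4_2, sv4_3, sv4_4, sv4_5, sv4_6, sv4_7, sv4_8, sv4_9,
    sv4_10, sv4_11, sv4_12, sv4_13, sv4_14, sv4_15,
    show (0:Fin 2)+0 = 0 from rfl, show (0:Fin 2)+1 = 1 from rfl,
    show (1:Fin 2)+0 = 1 from rfl, show (1:Fin 2)+1 = 0 from rfl] <;>
  norm_num <;>
  module

lemma G4_eq_PU_9 : G4 9 = idTensorMat (PU 9) (G4 0) := by
  show (2 : ℂ)⁻¹ • (ket4 0 0 1 0 - ket4 0 1 0 1 + ket4 1 0 0 0 - ket4 1 1 1 1) = idTensorMat (PU 9) ((2 : ℂ)⁻¹ • (ket4 0 0 0 0 + ket4 0 1 1 1 + ket4 1 0 1 0 + ket4 1 1 0 1))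
  simp only [G4, Matrix.cons_val_zero, Matrix.cons_val_one, Matrix.head_cons,
    idTensorMat_smul, idTensorMat_add, idTensorMat_sub, PU_ket4,
    tv3_0, tv3_1, tv3_2, tv3_3, tv3_4, tv3_5, tv3_6, tv3_7, tv3_8, tv3_9,
    tv3_10, tv3_11, tv3_12, tv3_13, tv3_14, tv3_15,
    tv4_0, tv4_1, tv4_2, tv4_3, tv4_4, tv4_5, tv4_6, tv4_7, tv4_8, tv4_9,
    tv4_10, tv4_11, tv4_12, tv4_13, tv4_14, tv4_15,
    sv3_0, sv3_1, sv3_2, sv3_3, sv3_4, sv3_5, sv3_6, sv3_7, sv3_8, sv3_9,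
    sv3_10, sv3_11, sv3_12, sv3_13, sv3_14, sv3_15,
    sv4_0, sv4_1, sv4_2, sv4_3, sv4_4, sv4_5, sv4_6, sv4_7, sv4_8, sv4_9,
    sv4_10, sv4_11, sv4_12, sv4_13, sv4_14, sv4_15,
    show (0:Fin 2)+0 = 0 from rfl, show (0:Fin 2)+1 = 1 from rfl,
    show (1:Fin 2)+0 = 1 from rfl, show (1:Fin 2)+1 = 0 from rfl] <;>
  norm_num <;>
  module

lemma G4_eq_PU_10 : G4 10 = idTensorMat (PU 10) (G4 0) := by
  show (2 : ℂ)⁻¹ • (ket4 0 0 1 0 + ket4 0 1 0 1 - ket4 1 0 0 0 - ket4 1 1 1 1) = idTensorMat (PU 10) ((2 : ℂ)⁻¹ • (ket4 0 0 0 0 + ket4 0 1 1 1 + ket4 1 0 1 0 + ket4 1 1 0 1))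
  simp only [G4, Matrix.cons_val_zero, Matrix.cons_val_one, Matrix.head_cons,
    idTensorMat_smul, idTensorMat_add, idTensorMat_sub, PU_ket4,
    tv3_0, tv3_1, tv3_2, tv3_3, tv3_4, tv3_5, tv3_6, tv3_7, tv3_8, tv3_9,
    tv3_10, tv3_11, tv3_12, tv3_13, tv3_14, tv3_15,
    tv4_0, tv4_1, tv4_2, tv4_3, tv4_4, tv4_5, tv4_6, tv4_7, tv4_8, tv4_9,
    tv4_10, tv4_11, tv4_12, tv4_13, tv4_14, tv4_15,
    sv3_0, sv3_1, sv3_2, sv3_3, sv3_4, sv3_5, sv3_6, sv3_7, sv3_8, sv3_9,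
    sv3_10, sv3_11, sv3_12, sv3_13, sv3_14, sv3_15,
    sv4_0, sv4_1, sv4_2, sv4_3, sv4_4, sv4_5, sv4_6, sv4_7, sv4_8, sv4_9,
    sv4_10, sv4_11, sv4_12, sv4_13, sv4_14, sv4_15,
    show (0:Fin 2)+0 = 0 from rfl, show (0:Fin 2)+1 = 1 from rfl,
    show (1:Fin 2)+0 = 1 from rfl, show (1:Fin 2)+1 = 0 from rfl] <;>
  norm_num <;>
  module

lemma G4_eq_PU_11 : G4 11 = idTensorMat (PU 11) (G4 0) := by
  show (2 : ℂ)⁻¹ • (ket4 0 0 1 0 - ket4 0 1 0 1 - ket4 1 0 0 0 + ket4 1 1 1 1) = idTensorMat (PU 11) ((2 : ℂ)⁻¹ • (ket4 0 0 0 0 + ket4 0 1 1 1 + ket4 1 0 1 0 + ket4 1 1 0 1))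
  simp only [G4, Matrix.cons_val_zero, Matrix.cons_val_one, Matrix.head_cons,
    idTensorMat_smul, idTensorMat_add, idTensorMat_sub, PU_ket4,
    tv3_0, tv3_1, tv3_2, tv3_3, tv3_4, tv3_5, tv3_6, tv3_7, tv3_8, tv3_9,
    tv3_10, tv3_11, tv3_12, tv3_13, tv3_14, tv3_15,
    tv4_0, tv4_1, tv4_2, tv4_3, tv4_4, tv4_5, tv4_6, tv4_7, tv4_8, tv4_9,
    tv4_10, tv4_11, tv4_12, tv4_13, tv4_14, tv4_15,
    sv3_0, sv3_1, sv3_2, sv3_3, sv3_4, sv3_5, sv3_6, sv3_7, sv3_8, sv3_9,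
    sv3_10, sv3_11, sv3_12, sv3_13, sv3_14, sv3_15,
    sv4_0, sv4_1, sv4_2, sv4_3, sv4_4, sv4_5, sv4_6, sv4_7, sv4_8, sv4_9,
    sv4_10, sv4_11, sv4_12, sv4_13, sv4_14, sv4_15,
    show (0:Fin 2)+0 = 0 from rfl, show (0:Fin 2)+1 = 1 from rfl,
    show (1:Fin 2)+0 = 1 from rfl, show (1:Fin 2)+1 = 0 from rfl] <;>
  norm_num <;>
  module

lemma G4_eq_PU_12 : G4 12 = idTensorMat (PU 12) (G4 0) := by
  show (2 : ℂ)⁻¹ • (ket4 0 0 1 1 + ket4 0 1 0 0 + ket4 1 0 0 1 + ket4 1 1 1 0) = idTensorMat (PU 12) ((2 : ℂ)⁻¹ • (ket4 0 0 0 0 + ket4 0 1 1 1 + ket4 1 0 1 0 + ket4 1 1 0 1))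
  simp only [G4, Matrix.cons_val_zero, Matrix.cons_val_one, Matrix.head_cons,
    idTensorMat_smul, idTensorMat_add, idTensorMat_sub, PU_ket4,
    tv3_0, tv3_1, tv3_2, tv3_3, tv3_4, tv3_5, tv3_6, tv3_7, tv3_8, tv3_9,
    tv3_10, tv3_11, tv3_12, tv3_13, tv3_14, tv3_15,
    tv4_0, tv4_1, tv4_2, tv4_3, tv4_4, tv4_5, tv4_6, tv4_7, tv4_8, tv4_9,
    tv4_10, tv4_11, tv4_12, tv4_13, tv4_14, tv4_15,
    sv3_0, sv3_1, sv3_2, sv3_3, sv3_4, sv3_5, sv3_6, sv3_7, sv3_8, sv3_9,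
    sv3_10, sv3_11, sv3_12, sv3_13, sv3_14, sv3_15,
    sv4_0, sv4_1, sv4_2, sv4_3, sv4_4, sv4_5, sv4_6, sv4_7, sv4_8, sv4_9,
    sv4_10, sv4_11, sv4_12, sv4_13, sv4_14, sv4_15,
    show (0:Fin 2)+0 = 0 from rfl, show (0:Fin 2)+1 = 1 from rfl,
    show (1:Fin 2)+0 = 1 from rfl, show (1:Fin 2)+1 = 0 from rfl] <;>
  norm_num <;>
  module

lemma G4_eq_PU_13 : G4 13 = idTensorMat (PU 13) (G4 0) := by
  show (2 : ℂ)⁻¹ • (ket4 0 0 1 1 - ket4 0 1 0 0 + ket4 1 0 0 1 - ket4 1 1 1 0) = idTensorMat (PU 13) ((2 : ℂ)⁻¹ • (ket4 0 0 0 0 + ket4 0 1 1 1 + ket4 1 0 1 0 + ket4 1 1 0 1))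
  simp only [G4, Matrix.cons_val_zero, Matrix.cons_val_one, Matrix.head_cons,
    idTensorMat_smul, idTensorMat_add, idTensorMat_sub, PU_ket4,
    tv3_0, tv3_1, tv3_2, tv3_3, tv3_4, tv3_5, tv3_6, tv3_7, tv3_8, tv3_9,
    tv3_10, tv3_11, tv3_12, tv3_13, tv3_14, tv3_15,
    tv4_0, tv4_1, tv4_2, tv4_3, tv4_4, tv4_5, tv4_6, tv4_7, tv4_8, tv4_9,
    tv4_10, tv4_11, tv4_12, tv4_13, tv4_14, tv4_15,
    sv3_0, sv3_1, sv3_2, sv3_3, sv3_4, sv3_5, sv3_6, sv3_7, sv3_8, sv3_9,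
    sv3_10, sv3_11, sv3_12, sv3_13, sv3_14, sv3_15,
    sv4_0, sv4_1, sv4_2, sv4_3, sv4_4, sv4_5, sv4_6, sv4_7, sv4_8, sv4_9,
    sv4_10, sv4_11, sv4_12, sv4_13, sv4_14, sv4_15,
    show (0:Fin 2)+0 = 0 from rfl, show (0:Fin 2)+1 = 1 from rfl,
    show (1:Fin 2)+0 = 1 from rfl, show (1:Fin 2)+1 = 0 from rfl] <;>
  norm_num <;>
  module

lemma G4_eq_PU_14 : G4 14 = idTensorMat (PU 14) (G4 0) := by
  show (2 : ℂ)⁻¹ • (ket4 0 0 1 1 + ket4 0 1 0 0 - ket4 1 0 0 1 - ket4 1 1 1 0) = idTensorMat (PU 14) ((2 : ℂ)⁻¹ • (ket4 0 0 0 0 + ket4 0 1 1 1 + ket4 1 0 1 0 + ket4 1 1 0 1))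
  simp only [G4, Matrix.cons_val_zero, Matrix.cons_val_one, Matrix.head_cons,
    idTensorMat_smul, idTensorMat_add, idTensorMat_sub, PU_ket4,
    tv3_0, tv3_1, tv3_2, tv3_3, tv3_4, tv3_5, tv3_6, tv3_7, tv3_8, tv3_9,
    tv3_10, tv3_11, tv3_12, tv3_13, tv3_14, tv3_15,
    tv4_0, tv4_1, tv4_2, tv4_3, tv4_4, tv4_5, tv4_6, tv4_7, tv4_8, tv4_9,
    tv4_10, tv4_11, tv4_12, tv4_13, tv4_14, tv4_15,
    sv3_0, sv3_1, sv3_2, sv3_3, sv3_4, sv3_5, sv3_6, sv3_7, sv3_8, sv3_9,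
    sv3_10, sv3_11, sv3_12, sv3_13, sv3_14, sv3_15,
    sv4_0, sv4_1, sv4_2, sv4_3, sv4_4, sv4_5, sv4_6, sv4_7, sv4_8, sv4_9,
    sv4_10, sv4_11, sv4_12, sv4_13, sv4_14, sv4_15,
    show (0:Fin 2)+0 = 0 from rfl, show (0:Fin 2)+1 = 1 from rfl,
    show (1:Fin 2)+0 = 1 from rfl, show (1:Fin 2)+1 = 0 from rfl] <;>
  norm_num <;>
  module

lemma G4_eq_PU_15 : G4 15 = idTensorMat (PU 15) (G4 0) := by
  show (2 : ℂ)⁻¹ • (ket4 0 0 1 1 - ket4 0 1 0 0 - ket4 1 0 0 1 + ket4 1 1 1 0) = idTensorMat (PU 15) ((2 : ℂ)⁻¹ • (ket4 0 0 0 0 + ket4 0 1 1 1 + ket4 1 0 1 0 + ket4 1 1 0 1))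
  simp only [G4, Matrix.cons_val_zero, Matrix.cons_val_one, Matrix.head_cons,
    idTensorMat_smul, idTensorMat_add, idTensorMat_sub, PU_ket4,
    tv3_0, tv3_1, tv3_2, tv3_3, tv3_4, tv3_5, tv3_6, tv3_7, tv3_8, tv3_9,
    tv3_10, tv3_11, tv3_12, tv3_13, tv3_14, tv3_15,
    tv4_0, tv4_1, tv4_2, tv4_3, tv4_4, tv4_5, tv4_6, tv4_7, tv4_8, tv4_9,
    tv4_10, tv4_11, tv4_12, tv4_13, tv4_14, tv4_15,
    sv3_0, sv3_1, sv3_2, sv3_3, sv3_4, sv3_5, sv3_6, sv3_7, sv3_8, sv3_9,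
    sv3_10, sv3_11, sv3_12, sv3_13, sv3_14, sv3_15,
    sv4_0, sv4_1, sv4_2, sv4_3, sv4_4, sv4_5, sv4_6, sv4_7, sv4_8, sv4_9,
    sv4_10, sv4_11, sv4_12, sv4_13, sv4_14, sv4_15,
    show (0:Fin 2)+0 = 0 from rfl, show (0:Fin 2)+1 = 1 from rfl,
    show (1:Fin 2)+0 = 1 from rfl, show (1:Fin 2)+1 = 0 from rfl] <;>
  norm_num <;>
  module

lemma G4_eq_PU (α : Fin 16) : G4 α = idTensorMat (PU α) (G4 0) := by
  fin_cases α
  · exact G4_eq_PU_0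
  · exact G4_eq_PU_1
  · exact G4_eq_PU_2
  · exact G4_eq_PU_3
  · exact G4_eq_PU_4
  · exact G4_eq_PU_5
  · exact G4_eq_PU_6
  · exact G4_eq_PU_7
  · exact G4_eq_PU_8
  · exact G4_eq_PU_9
  · exact G4_eq_PU_10
  · exact G4_eq_PU_11
  · exact G4_eq_PU_12
  · exact G4_eq_PU_13
  · exact G4_eq_PU_14
  · exact G4_eq_PU_15

/-- Viewing the sixteen states in `ℂ² ⊗ (ℂ² ⊗ ℂ² ⊗ ℂ²)`, for every
pair `α, β` there is a unitary `U` on the three-qubit space `ℂ² ⊗ ℂ² ⊗ ℂ²` with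
`G⁽⁴⁾_α = (I ⊗ U) G⁽⁴⁾_β`: every state of the set is obtained from any other by a
unitary acting on the last three qubits alone (the 1 : 3 bipartition property). -/
theorem G4_related_by_unitary_on_last_three_qubits (α β : Fin 16) :
    ∃ U : Matrix (Fin 2 × Fin 2 × Fin 2) (Fin 2 × Fin 2 × Fin 2) ℂ,
      U ∈ Matrix.unitaryGroup (Fin 2 × Fin 2 × Fin 2) ℂ ∧
      G4 α = idTensorMat U (G4 β) := by
  refine ⟨PU α * star (PU β), mul_mem (PU_unitary α) (Unitary.star_mem (PU_unitary β)), ?_⟩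
  have h0 : idTensorMat (star (PU β)) (G4 β) = G4 0 := by
    rw [G4_eq_PU β, ← idTensorMat_mul]
    have : star (PU β) * PU β = 1 := (Matrix.mem_unitaryGroup_iff'.mp (PU_unitary β))
    rw [this, idTensorMat_one]
  rw [idTensorMat_mul, h0, ← G4_eq_PU]

end
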